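/- Let h : {a}* → {a,b}* be the function that changes every other letter a to b, defined by h(a^{2n}) = (ab)ⁿ and h(a^{2n+1}) = (ab)ⁿ·a. Then h is not A-continuous: there exists a language L ⊆ {a,b}* recognized by a finite aperiodic monoid such that the preimage h⁻¹(L) is not recognized by any finite aperiodic monoid. -/

import Mathlib

/-- The two-letter alphabet `{a, b}`. -/
inductive AB : Type
  | a : AB
  | b : AB
deriving DecidableEq

/-- `wpow x k` is the `k`-fold concatenation `xᵏ` of the word `x`. -/
def wpow {A : Type*} (x : List A) : ℕ → List A
  | 0 => []
  | n + 1 => x ++ wpow x n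

/-- The function changing every other `a` to `b`:
`h(a^{2n}) = (ab)ⁿ` and `h(a^{2n+1}) = (ab)ⁿ·a`. -/
def hAlt (w : List Unit) : List AB :=
  wpow [AB.a, AB.b] (w.length / 2) ++ (if w.length % 2 = 1 then [AB.a] else [])

/-- A monoid is aperiodic if every element `x` satisfies `x^{n+1} = xⁿ` for
some `n`. -/
def IsAperiodic (M : Type) [Monoid M] : Prop :=
  ∀ x : M, ∃ n : ℕ, x ^ (n + 1) = x ^ n

/-- `L` is recognized by a finite aperiodic monoid. -/
def RecogByFinAperiodicMonoid {A : Type} (L : Set (List A)) : Prop :=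
  ∃ (M : Type) (_ : Fintype M) (_ : Monoid M), IsAperiodic M ∧
    ∃ (φ : FreeMonoid A →* M) (S : Set M),
      L = {w : List A | φ (FreeMonoid.ofList w) ∈ S}

/-- The "last letter" monoid: identity plus an absorbing copy of `AB`. -/
inductive LastM : Type
  | e : LastM
  | s : AB → LastM
deriving DecidableEq

instance : Fintype LastM :=
  ⟨{LastM.e, LastM.s AB.a, LastM.s AB.b}, fun x => by cases x with
    | e => simp
    | s c => cases c <;> simp⟩

instance : Monoid LastM where
  mul x y := match y with | LastM.e => x | LastM.s c => LastM.s c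
  one := LastM.e
  mul_assoc x y z := by cases z <;> rfl
  one_mul x := by cases x <;> rfl
  mul_one x := rfl

lemma LastM.mul_s (x : LastM) (c : AB) : x * LastM.s c = LastM.s c := rfl

lemma LastM.idem (x : LastM) : x * x = x := by cases x <;> rfl

lemma LastM.aperiodic : IsAperiodic LastM :=
  fun x => ⟨1, by rw [pow_succ, pow_one, LastM.idem]⟩

def φL : FreeMonoid AB →* LastM := FreeMonoid.lift LastM.s

lemma sb_pow (k : ℕ) :
    (LastM.s AB.b) ^ k = if k = 0 then LastM.e else LastM.s AB.b := by
  induction k with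
  | zero => simp; rfl
  | succ m ih => rw [pow_succ, LastM.mul_s]; simp

lemma φL_wpow_ab (k : ℕ) :
    φL (FreeMonoid.ofList (wpow [AB.a, AB.b] k)) = (LastM.s AB.b) ^ k := by
  induction k with
  | zero => rw [pow_zero]; exact map_one φL
  | succ m ih =>
      have h2 : FreeMonoid.ofList (wpow [AB.a, AB.b] (m + 1))
          = FreeMonoid.ofList [AB.a, AB.b] * FreeMonoid.ofList (wpow [AB.a, AB.b] m) := rfl
      rw [h2, map_mul, ih, pow_succ']
      congr 1

lemma pow_stab {M : Type} [Monoid M] {x : M} {n : ℕ} (h : x ^ (n + 1) = x ^ n) :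
    ∀ j, x ^ (n + j) = x ^ n := by
  intro j
  induction j with
  | zero => rfl
  | succ k ih => rw [← Nat.add_assoc, pow_succ, ih, ← pow_succ, h]

lemma φ_replicate {M : Type} [Monoid M] (φ : FreeMonoid Unit →* M) (k : ℕ) :
    φ (FreeMonoid.ofList (List.replicate k ())) = (φ (FreeMonoid.of ())) ^ k := by
  induction k with
  | zero => rw [pow_zero]; exact map_one φ
  | succ m ih =>
      rw [List.replicate_succ, FreeMonoid.ofList_cons, map_mul, ih, pow_succ']

/-- `hAlt` is not A-continuous. -/
theorem hAlt_not_a_continuous :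
    ∃ L : Set (List AB), RecogByFinAperiodicMonoid L ∧
      ¬ RecogByFinAperiodicMonoid (hAlt ⁻¹' L) := by
  classical
  refine ⟨{w : List AB | φL (FreeMonoid.ofList w) ∈ ({LastM.s AB.b} : Set LastM)}, ?_, ?_⟩
  · exact ⟨LastM, inferInstance, inferInstance, LastM.aperiodic, φL, {LastM.s AB.b}, rfl⟩
  · have key : ∀ w : List Unit,
        w ∈ hAlt ⁻¹' {w : List AB | φL (FreeMonoid.ofList w) ∈ ({LastM.s AB.b} : Set LastM)}
        ↔ (w.length % 2 = 0 ∧ w.length ≠ 0) := by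
      intro w
      have hsplit : FreeMonoid.ofList (hAlt w)
          = FreeMonoid.ofList (wpow [AB.a, AB.b] (w.length / 2))
            * FreeMonoid.ofList (if w.length % 2 = 1 then [AB.a] else []) := rfl
      constructor
      · intro hw
        simp only [Set.mem_preimage, Set.mem_setOf_eq, Set.mem_singleton_iff] at hw
        rw [hsplit, map_mul, φL_wpow_ab, sb_pow] at hw
        by_cases hpar : w.length % 2 = 1
        · exfalso
          rw [if_pos hpar] at hw
          have ha : φL (FreeMonoid.ofList [AB.a]) = LastM.s AB.a := rfl
          rw [ha, LastM.mul_s] at hw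
          exact absurd hw (by decide)
        · have h0 : w.length % 2 = 0 := by omega
          refine ⟨h0, ?_⟩
          intro hlen
          rw [if_neg hpar] at hw
          have he : φL (FreeMonoid.ofList ([] : List AB)) = (1 : LastM) := rfl
          rw [he, mul_one, hlen] at hw
          simp at hw
      · rintro ⟨h0, hne⟩
        simp only [Set.mem_preimage, Set.mem_setOf_eq, Set.mem_singleton_iff]
        rw [hsplit, map_mul, φL_wpow_ab, sb_pow]
        have hpar : ¬ w.length % 2 = 1 := by omega
        rw [if_neg hpar]
        have he : φL (FreeMonoid.ofList ([] : List AB)) = (1 : LastM) := rfl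
        rw [he, mul_one]
        have hk : w.length / 2 ≠ 0 := by omega
        rw [if_neg hk]
    rintro ⟨M, _, _, haper, φ, S, hS⟩
    set x := φ (FreeMonoid.of ()) with hx
    obtain ⟨n, hn⟩ := haper x
    have heq : x ^ (2 * n + 2) = x ^ (2 * n + 3) := by
      have h1 := pow_stab hn (n + 2)
      have h2 := pow_stab hn (n + 3)
      rw [show n + (n + 2) = 2 * n + 2 by ring] at h1
      rw [show n + (n + 3) = 2 * n + 3 by ring] at h2
      rw [h1, h2]
    have hmemfun : ∀ k : ℕ, (List.replicate k ()) ∈ hAlt ⁻¹'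
        {w : List AB | φL (FreeMonoid.ofList w) ∈ ({LastM.s AB.b} : Set LastM)}
        ↔ x ^ k ∈ S := by
      intro k
      rw [hS]
      simp only [Set.mem_setOf_eq]
      rw [φ_replicate φ k]
    have hA := (key (List.replicate (2 * n + 2) ())).mpr
      (by refine ⟨?_, ?_⟩ <;> simp <;> omega)
    have hB : ¬ (List.replicate (2 * n + 3) ()) ∈ hAlt ⁻¹'
        {w : List AB | φL (FreeMonoid.ofList w) ∈ ({LastM.s AB.b} : Set LastM)} := by
      intro hc
      have h := (key _).mp hc
      simp at h
    rw [hmemfun] at hA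
    rw [hmemfun, ← heq] at hB
    exact hB hA
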